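/- In 𝔤_0, set ĥ₀ = 2e₀ − e₁, ĥ₁ = (1/2)e₂, ĥ₂ = e₁, and let g_ν (ν > 0) be the inner product with matrix [[1, 1/2, 0], [1/2, 1, 0], [0, 0, ν]] in the basis e₀, e₁, e₂. Then (ĥ₀, ĥ₁, ĥ₂) is a basis of 𝔤_0 with [ĥ₀, ĥ₁] = 0, [ĥ₀, ĥ₂] = 0 and [ĥ₁, ĥ₂] = ĥ₂ (so 𝔤_0 is the direct sum of the central line ℝĥ₀ and the 2-dimensional non-abelian subalgebra spanned by ĥ₁, ĥ₂, the Lie algebra of the real hyperbolic plane), and the Gram matrix of g_ν in the basis ĥ₀, ĥ₁, ĥ₂ is diag(3, ν/4, 1); in particular the splitting is g_ν-orthogonal. -/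

import Mathlib

noncomputable section

/-- The underlying space of the 3-dimensional Lie algebras under consideration. -/
abbrev V3 : Type := Fin 3 → ℝ

/-- The bracket of the Lie algebra `𝔤_c`:
`[e₀,e₁] = 0`, `[e₂,e₀] = e₁`, `[e₂,e₁] = −c e₀ + 2 e₁`, extended bilinearly. -/
def braC (c : ℝ) (x y : V3) : V3 :=
  ![-c * (x 2 * y 1 - y 2 * x 1),
    (x 2 * y 0 - y 2 * x 0) + 2 * (x 2 * y 1 - y 2 * x 1),
    0]

/-- The inner product `g_ν` on `𝔤_0`, with matrix `[[1,1/2,0],[1/2,1,0],[0,0,ν]]`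
in the basis `e₀,e₁,e₂`. -/
def gnu (ν : ℝ) (x y : V3) : ℝ :=
  x 0 * y 0 + (1/2) * (x 0 * y 1 + x 1 * y 0) + x 1 * y 1 + ν * (x 2 * y 2)

/-- `ĥ₀ = 2e₀ − e₁`. -/
def h0 : V3 := ![2, -1, 0]

/-- `ĥ₁ = (1/2) e₂`. -/
def h1 : V3 := ![0, 0, 1/2]

/-- `ĥ₂ = e₁`. -/
def h2 : V3 := ![0, 1, 0]

/-- `(ĥ₀, ĥ₁, ĥ₂)` is a basis of `𝔤_0` with `[ĥ₀,ĥ₁] = [ĥ₀,ĥ₂] = 0`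
and `[ĥ₁,ĥ₂] = ĥ₂`, and the Gram matrix of `g_ν` in this basis is `diag(3, ν/4, 1)`;
in particular the splitting `ℝĥ₀ ⊕ span(ĥ₁,ĥ₂)` is `g_ν`-orthogonal. -/
theorem stmt5 (ν : ℝ) (hν : 0 < ν) :
    LinearIndependent ℝ ![h0, h1, h2] ∧
    Submodule.span ℝ {h0, h1, h2} = (⊤ : Submodule ℝ V3) ∧
    braC 0 h0 h1 = 0 ∧ braC 0 h0 h2 = 0 ∧ braC 0 h1 h2 = h2 ∧
    gnu ν h0 h0 = 3 ∧ gnu ν h1 h1 = ν/4 ∧ gnu ν h2 h2 = 1 ∧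
    gnu ν h0 h1 = 0 ∧ gnu ν h0 h2 = 0 ∧ gnu ν h1 h2 = 0 := by
  refine ⟨?_, ?_, ?_, ?_, ?_, ?_, ?_, ?_, ?_, ?_, ?_⟩
  · rw [Fintype.linearIndependent_iff]
    intro g hg i
    have ha := congrFun hg 0
    have hb := congrFun hg 1
    have hc := congrFun hg 2
    simp [Fin.sum_univ_three, h0, h1, h2, Matrix.vecHead, Matrix.vecTail] at ha hb hc
    fin_cases i <;> simp <;> linarith
  · rw [eq_top_iff]
    intro x _
    have hx : x = (x 0 / 2) • h0 + (2 * x 2) • h1 + (x 1 + x 0 / 2) • h2 := by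
      funext i; fin_cases i <;> simp [h0, h1, h2] <;> ring
    rw [hx]
    refine Submodule.add_mem _ (Submodule.add_mem _ ?_ ?_) ?_ <;>
      exact Submodule.smul_mem _ _ (Submodule.subset_span (by simp))
  · funext i; fin_cases i <;> simp [braC, h0, h1, h2]
  · funext i; fin_cases i <;> simp [braC, h0, h1, h2]
  · funext i; fin_cases i <;> norm_num [braC, h0, h1, h2, Matrix.cons_val_two, Matrix.tail_cons, Matrix.head_cons]
  all_goals (simp [gnu, h0, h1, h2]; try ring)
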